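/- arXiv:1812.07488 — 3 statements merged into one kernel-verified Lean document; each statement's English description precedes it below -/
import Mathlib

section
/- Let φ denote the standard Gaussian density and φ^{(l)} its l-th derivative. For every real X, every s > 0, every σ > 0, and every natural number l, the convolution identity ∫_ℝ (1/σ)·φ(θ/σ) · (1/s)·φ^{(l)}((X − θ)/s) dθ = (s^l / (σ² + s²)^{(l+1)/2}) · φ^{(l)}(X / √(σ² + s²)) holds. -/
open MeasureTheory Real

/-- The standard Gaussian density `φ`. -/
noncomputable def phi (x : ℝ) : ℝ := (Real.sqrt (2 * Real.pi))⁻¹ * Real.exp (-x ^ 2 / 2)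

/-- The `l`-th derivative `φ^{(l)}` of the standard Gaussian density (`φ^{(0)} = φ`). -/
noncomputable def phiD (l : ℕ) : ℝ → ℝ := iteratedDeriv l phi

open Polynomial Filter Metric

lemma iter_deriv_const_mul (c : ℝ) (f : ℝ → ℝ) (n : ℕ) :
    deriv^[n] (fun x => c * f x) = fun x => c * deriv^[n] f x := by
  induction n with
  | zero => rfl
  | succ n ih =>
    rw [Function.iterate_succ_apply', ih]
    funext x
    rw [Function.iterate_succ_apply', deriv_const_mul_field]

lemma phiD_eq (l : ℕ) (x : ℝ) :
    phiD l x = (Real.sqrt (2 * Real.pi))⁻¹ *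
      ((-1 : ℝ) ^ l * aeval x (hermite l) * Real.exp (-(x ^ 2 / 2))) := by
  have hphi : phi = fun x => (Real.sqrt (2 * Real.pi))⁻¹ * Real.exp (-(x ^ 2 / 2)) := by
    funext x; rw [phi, neg_div]
  rw [phiD, hphi, iteratedDeriv_eq_iterate, iter_deriv_const_mul]
  simp only [Polynomial.deriv_gaussian_eq_hermite_mul_gaussian]

lemma pow_mul_exp_le (i : ℕ) (x : ℝ) :
    |x| ^ i * Real.exp (-(x ^ 2 / 2)) ≤ Real.exp (1 / 2) * (i.factorial : ℝ) := by
  have h1 : |x| ^ i ≤ (i.factorial : ℝ) * Real.exp |x| := by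
    have hs := Real.sum_le_exp_of_nonneg (abs_nonneg x) (i + 1)
    have hterm : |x| ^ i / (i.factorial : ℝ) ≤ Real.exp |x| :=
      le_trans (Finset.single_le_sum (f := fun j => |x| ^ j / (j.factorial : ℝ))
        (fun j _ => by positivity) (Finset.self_mem_range_succ i)) hs
    have hfac : (0 : ℝ) < (i.factorial : ℝ) := by exact_mod_cast i.factorial_pos
    calc |x| ^ i = (|x| ^ i / (i.factorial : ℝ)) * (i.factorial : ℝ) := by field_simp
      _ ≤ Real.exp |x| * (i.factorial : ℝ) := by
          exact mul_le_mul_of_nonneg_right hterm hfac.le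
      _ = (i.factorial : ℝ) * Real.exp |x| := by ring
  have h2 : Real.exp (-(x ^ 2 / 2)) ≤ Real.exp (1 / 2) * Real.exp (-|x|) := by
    rw [← Real.exp_add]
    apply Real.exp_le_exp.mpr
    have : 0 ≤ (|x| - 1) ^ 2 := sq_nonneg _
    have hxa : |x| ^ 2 = x ^ 2 := sq_abs x
    nlinarith
  calc |x| ^ i * Real.exp (-(x ^ 2 / 2))
      ≤ ((i.factorial : ℝ) * Real.exp |x|) * (Real.exp (1 / 2) * Real.exp (-|x|)) := by
        apply mul_le_mul h1 h2 (Real.exp_pos _).le (by positivity)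
    _ = Real.exp (1 / 2) * (i.factorial : ℝ) * (Real.exp |x| * Real.exp (-|x|)) := by ring
    _ = Real.exp (1 / 2) * (i.factorial : ℝ) := by
        rw [← Real.exp_add, add_neg_cancel, Real.exp_zero, mul_one]

lemma phiD_bound (l : ℕ) : ∃ C : ℝ, ∀ x : ℝ, |phiD l x| ≤ C := by
  refine ⟨(Real.sqrt (2 * Real.pi))⁻¹ * ∑ i ∈ Finset.range ((hermite l).natDegree + 1),
      |((hermite l).coeff i : ℝ)| * (Real.exp (1 / 2) * (i.factorial : ℝ)), fun x => ?_⟩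
  rw [phiD_eq, abs_mul, abs_mul, abs_mul, abs_pow, abs_neg, abs_one, one_pow, one_mul,
    abs_of_nonneg (inv_nonneg.mpr (Real.sqrt_nonneg _)), abs_of_nonneg (Real.exp_pos _).le]
  apply mul_le_mul_of_nonneg_left _ (inv_nonneg.mpr (Real.sqrt_nonneg _))
  have hev : (aeval x (hermite l) : ℝ) = ∑ i ∈ Finset.range ((hermite l).natDegree + 1),
      ((hermite l).coeff i : ℝ) * x ^ i := by
    rw [Polynomial.aeval_eq_sum_range]
    simp [zsmul_eq_mul]
  calc |aeval x (hermite l)| * Real.exp (-(x ^ 2 / 2))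
      ≤ (∑ i ∈ Finset.range ((hermite l).natDegree + 1),
          |((hermite l).coeff i : ℝ)| * |x| ^ i) * Real.exp (-(x ^ 2 / 2)) := by
        apply mul_le_mul_of_nonneg_right _ (Real.exp_pos _).le
        rw [hev]
        refine (Finset.abs_sum_le_sum_abs _ _).trans ?_
        refine Finset.sum_le_sum fun i _ => ?_
        rw [abs_mul, abs_pow]
    _ = ∑ i ∈ Finset.range ((hermite l).natDegree + 1),
          |((hermite l).coeff i : ℝ)| * (|x| ^ i * Real.exp (-(x ^ 2 / 2))) := by
        rw [Finset.sum_mul]; exact Finset.sum_congr rfl fun i _ => by ring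
    _ ≤ _ := Finset.sum_le_sum fun i _ =>
        mul_le_mul_of_nonneg_left (pow_mul_exp_le i x) (abs_nonneg _)

lemma differentiable_phiD (l : ℕ) : Differentiable ℝ (phiD l) := by
  have h : phiD l = fun x => (Real.sqrt (2 * Real.pi))⁻¹ *
      ((-1 : ℝ) ^ l * aeval x (hermite l) * Real.exp (-(x ^ 2 / 2))) := funext (phiD_eq l)
  rw [h]
  apply Differentiable.const_mul
  apply Differentiable.mul
  · exact (Polynomial.differentiable_aeval _).const_mul _
  · exact (((differentiable_pow 2).div_const 2).neg).exp

lemma continuous_phiD (l : ℕ) : Continuous (phiD l) := (differentiable_phiD l).continuous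

lemma hasDerivAt_phiD (l : ℕ) (x : ℝ) : HasDerivAt (phiD l) (phiD (l + 1) x) x := by
  have h := (differentiable_phiD l x).hasDerivAt
  have : deriv (phiD l) x = phiD (l + 1) x := by
    rw [phiD, phiD, iteratedDeriv_succ]
  rwa [this] at h

lemma integrable_gauss {σ : ℝ} (hσ : 0 < σ) :
    Integrable (fun θ : ℝ => (1 / σ) * phi (θ / σ)) := by
  have h : (fun θ : ℝ => (1 / σ) * phi (θ / σ)) = fun θ =>
      ((1 / σ) * (Real.sqrt (2 * Real.pi))⁻¹) * Real.exp (-(1 / (2 * σ ^ 2)) * θ ^ 2) := by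
    funext θ
    rw [phi, show -(θ / σ) ^ 2 / 2 = -(1 / (2 * σ ^ 2)) * θ ^ 2 by
      field_simp]
    ring
  rw [h]
  exact (integrable_exp_neg_mul_sq (by positivity)).const_mul _


lemma conv_base (X s σ : ℝ) (hs : 0 < s) (hσ : 0 < σ) :
    ∫ θ : ℝ, (1 / σ) * phi (θ / σ) * ((1 / s) * phi ((X - θ) / s)) =
      (Real.sqrt (σ ^ 2 + s ^ 2))⁻¹ * phi (X / Real.sqrt (σ ^ 2 + s ^ 2)) := by
  have hσ' := hσ.ne'
  have hs' := hs.ne'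
  have hts : (0:ℝ) < σ ^ 2 + s ^ 2 := by positivity
  set t := Real.sqrt (σ ^ 2 + s ^ 2) with htdef
  have ht : 0 < t := Real.sqrt_pos.mpr hts
  have ht2 : t ^ 2 = σ ^ 2 + s ^ 2 := Real.sq_sqrt hts.le
  set c : ℝ := (Real.sqrt (2 * Real.pi))⁻¹ with hcdef
  have hc : 0 < c := by
    rw [hcdef]
    exact inv_pos.mpr (Real.sqrt_pos.mpr (by positivity))
  set b : ℝ := (σ ^ 2 + s ^ 2) / (2 * σ ^ 2 * s ^ 2) with hbdef
  have hb : 0 < b := by positivity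
  set m : ℝ := σ ^ 2 * X / (σ ^ 2 + s ^ 2) with hmdef
  set K : ℝ := c ^ 2 / (σ * s) * Real.exp (-(X ^ 2 / (2 * (σ ^ 2 + s ^ 2)))) with hKdef
  have key : ∀ θ : ℝ, (1 / σ) * phi (θ / σ) * ((1 / s) * phi ((X - θ) / s)) =
      K * Real.exp (-(b * (θ - m) ^ 2)) := by
    intro θ
    rw [phi, phi]
    have hexp : Real.exp (-(θ / σ) ^ 2 / 2) * Real.exp (-((X - θ) / s) ^ 2 / 2) =
        Real.exp (-(X ^ 2 / (2 * (σ ^ 2 + s ^ 2)))) * Real.exp (-(b * (θ - m) ^ 2)) := by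
      rw [← Real.exp_add, ← Real.exp_add]
      congr 1
      rw [hbdef, hmdef]
      field_simp
      ring
    rw [hKdef]
    calc (1 / σ) * (c * Real.exp (-(θ / σ) ^ 2 / 2)) *
          ((1 / s) * (c * Real.exp (-((X - θ) / s) ^ 2 / 2)))
        = c ^ 2 / (σ * s) *
            (Real.exp (-(θ / σ) ^ 2 / 2) * Real.exp (-((X - θ) / s) ^ 2 / 2)) := by ring
      _ = c ^ 2 / (σ * s) *
            (Real.exp (-(X ^ 2 / (2 * (σ ^ 2 + s ^ 2)))) * Real.exp (-(b * (θ - m) ^ 2))) := by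
          rw [hexp]
      _ = _ := by ring
  calc ∫ θ : ℝ, (1 / σ) * phi (θ / σ) * ((1 / s) * phi ((X - θ) / s))
      = ∫ θ : ℝ, K * Real.exp (-(b * (θ - m) ^ 2)) := by
        exact congrArg _ (funext key)
    _ = K * ∫ θ : ℝ, Real.exp (-(b * (θ - m) ^ 2)) := integral_const_mul _ _
    _ = K * ∫ θ : ℝ, Real.exp (-(b * θ ^ 2)) := by
        rw [show (fun θ : ℝ => Real.exp (-(b * θ ^ 2))) = fun θ => Real.exp (-(b * θ ^ 2)) from rfl]
        congr 1
        exact integral_sub_right_eq_self (fun θ : ℝ => Real.exp (-(b * θ ^ 2))) m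
    _ = K * Real.sqrt (Real.pi / b) := by
        rw [show (∫ θ : ℝ, Real.exp (-(b * θ ^ 2))) = ∫ θ : ℝ, Real.exp (-b * θ ^ 2) from by
          congr 1; funext θ; rw [neg_mul]]
        exact congrArg _ (integral_gaussian b)
    _ = t⁻¹ * phi (X / t) := by
        have hsq : Real.pi / b = (σ * s * Real.sqrt (2 * Real.pi) / t) ^ 2 := by
          rw [div_pow, mul_pow, mul_pow, Real.sq_sqrt (by positivity : (0:ℝ) ≤ 2 * Real.pi), ht2,
            hbdef]
          field_simp
        rw [hsq, Real.sqrt_sq (by positivity)]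
        rw [phi, hKdef]
        have hX : -(X / t) ^ 2 / 2 = -(X ^ 2 / (2 * (σ ^ 2 + s ^ 2))) := by
          rw [div_pow, ht2]; field_simp
        rw [hX]
        have h2π : c * Real.sqrt (2 * Real.pi) = 1 := by
          rw [hcdef]
          exact inv_mul_cancel₀ (Real.sqrt_ne_zero'.mpr (by positivity))
        have hcc : c ^ 2 * Real.sqrt (2 * Real.pi) = c := by
          rw [pow_two, mul_assoc, h2π, mul_one]
        have hss : σ * s ≠ 0 := mul_ne_zero hσ' hs'
        set E : ℝ := -(X ^ 2 / (2 * (σ ^ 2 + s ^ 2)))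
        calc c ^ 2 / (σ * s) * Real.exp E * (σ * s * Real.sqrt (2 * Real.pi) / t)
            = c ^ 2 * Real.sqrt (2 * Real.pi) * Real.exp E * (σ * s / (σ * s)) * t⁻¹ := by
              ring
          _ = t⁻¹ * (c * Real.exp E) := by rw [div_self hss, mul_one, hcc]; ring

lemma phi_nonneg (x : ℝ) : 0 ≤ phi x := by
  rw [phi]; positivity

lemma continuous_phi : Continuous phi :=
  continuous_const.mul (((continuous_pow 2).neg.div_const 2).rexp)

lemma continuous_gpart {σ : ℝ} : Continuous (fun θ : ℝ => (1 / σ) * phi (θ / σ)) :=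
  continuous_const.mul (continuous_phi.comp (continuous_id.div_const σ))

lemma integrable_F {s σ : ℝ} (hs : 0 < s) (hσ : 0 < σ) (l : ℕ) (x : ℝ) :
    Integrable (fun θ : ℝ => (1 / σ) * phi (θ / σ) * ((1 / s) * phiD l ((x - θ) / s))) := by
  obtain ⟨C, hC⟩ := phiD_bound l
  have h : (fun θ : ℝ => (1 / σ) * phi (θ / σ) * ((1 / s) * phiD l ((x - θ) / s))) =
      fun θ : ℝ => ((1 / s) * phiD l ((x - θ) / s)) * ((1 / σ) * phi (θ / σ)) := by
    funext θ; ring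
  rw [h]
  apply (integrable_gauss hσ).bdd_mul (c := (1 / s) * C)
  · exact (continuous_const.mul ((continuous_phiD l).comp
      ((continuous_const.sub continuous_id).div_const s))).aestronglyMeasurable
  · refine Eventually.of_forall fun θ => ?_
    rw [norm_mul, Real.norm_eq_abs, Real.norm_eq_abs, abs_of_pos (by positivity : (0:ℝ) < 1 / s)]
    exact mul_le_mul_of_nonneg_left (hC _) (by positivity)

lemma hasDerivAt_conv {s σ : ℝ} (hs : 0 < s) (hσ : 0 < σ) (l : ℕ) (x₀ : ℝ) :
    HasDerivAt (fun x => ∫ θ : ℝ, (1 / σ) * phi (θ / σ) * ((1 / s) * phiD l ((x - θ) / s)))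
      ((1 / s) * ∫ θ : ℝ, (1 / σ) * phi (θ / σ) * ((1 / s) * phiD (l + 1) ((x₀ - θ) / s))) x₀ := by
  obtain ⟨C, hC⟩ := phiD_bound (l + 1)
  have hC0 : 0 ≤ C := le_trans (abs_nonneg _) (hC 0)
  have main := hasDerivAt_integral_of_dominated_loc_of_deriv_le (𝕜 := ℝ) (μ := volume)
      (F := fun x θ => (1 / σ) * phi (θ / σ) * ((1 / s) * phiD l ((x - θ) / s)))
      (F' := fun x θ => (1 / σ) * phi (θ / σ) * ((1 / s ^ 2) * phiD (l + 1) ((x - θ) / s)))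
      (x₀ := x₀) (s := ball x₀ 1)
      (bound := fun θ => (1 / σ) * phi (θ / σ) * ((1 / s ^ 2) * C)) (ball_mem_nhds x₀ one_pos)
      (Eventually.of_forall fun x => (continuous_gpart.mul (continuous_const.mul
        ((continuous_phiD l).comp ((continuous_const.sub continuous_id).div_const
          s)))).aestronglyMeasurable)
      (integrable_F hs hσ l x₀)
      ((continuous_gpart.mul (continuous_const.mul ((continuous_phiD (l + 1)).comp
        ((continuous_const.sub continuous_id).div_const s)))).aestronglyMeasurable)
      (Eventually.of_forall fun θ => fun x _ => ?_)
      (((integrable_gauss hσ).mul_const _))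
      (Eventually.of_forall fun θ => fun x _ => ?_)
  · have heq : (∫ θ : ℝ, (1 / σ) * phi (θ / σ) * ((1 / s ^ 2) * phiD (l + 1) ((x₀ - θ) / s)))
        = (1 / s) * ∫ θ : ℝ, (1 / σ) * phi (θ / σ) * ((1 / s) * phiD (l + 1) ((x₀ - θ) / s)) := by
      rw [← integral_const_mul]
      congr 1
      funext θ
      field_simp
    rw [heq] at main
    exact main.2
  · -- bound
    have h1 : 0 ≤ 1 / σ * phi (θ / σ) := mul_nonneg (by positivity) (phi_nonneg _)
    simp only [norm_mul, Real.norm_eq_abs]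
    rw [abs_of_nonneg (phi_nonneg _), abs_of_nonneg (by positivity : (0:ℝ) ≤ 1 / σ),
      abs_of_nonneg (by positivity : (0:ℝ) ≤ 1 / s ^ 2)]
    exact mul_le_mul_of_nonneg_left (mul_le_mul_of_nonneg_left (hC _) (by positivity)) h1
  · -- differentiability
    have h1 : HasDerivAt (fun y : ℝ => (y - θ) / s) (1 / s) x := by
      simpa using ((hasDerivAt_id x).sub_const θ).div_const s
    have h2 := (hasDerivAt_phiD l ((x - θ) / s)).comp x h1
    have h3 : HasDerivAt (fun x => 1 / σ * phi (θ / σ) * (1 / s * phiD l ((x - θ) / s)))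
        (1 / σ * phi (θ / σ) * (1 / s * (phiD (l + 1) ((x - θ) / s) * (1 / s)))) x :=
      (h2.const_mul _).const_mul _
    convert h3 using 1
    · rfl
    · rfl
    · ring


lemma conv_key {s σ : ℝ} (hs : 0 < s) (hσ : 0 < σ) (l : ℕ) :
    ∀ X : ℝ, (∫ θ : ℝ, (1 / σ) * phi (θ / σ) * ((1 / s) * phiD l ((X - θ) / s))) =
      s ^ l / (Real.sqrt (σ ^ 2 + s ^ 2)) ^ (l + 1) *
        phiD l (X / Real.sqrt (σ ^ 2 + s ^ 2)) := by
  induction l with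
  | zero =>
    intro X
    simp only [phiD, iteratedDeriv_zero, pow_zero, zero_add, pow_one]
    rw [conv_base X s σ hs hσ, one_div]
  | succ l ih =>
    intro X
    have hts : (0:ℝ) < σ ^ 2 + s ^ 2 := by positivity
    set t := Real.sqrt (σ ^ 2 + s ^ 2) with htdef
    have ht : 0 < t := Real.sqrt_pos.mpr hts
    have hF := hasDerivAt_conv hs hσ l X
    have hfun : (fun x => ∫ θ : ℝ, (1 / σ) * phi (θ / σ) * ((1 / s) * phiD l ((x - θ) / s))) =
        fun x => s ^ l / t ^ (l + 1) * phiD l (x / t) := funext ih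
    rw [hfun] at hF
    have h1 : HasDerivAt (fun x : ℝ => x / t) (1 / t) X := by
      simpa using (hasDerivAt_id X).div_const t
    have hG : HasDerivAt (fun x => s ^ l / t ^ (l + 1) * phiD l (x / t))
        (s ^ l / t ^ (l + 1) * (phiD (l + 1) (X / t) * (1 / t))) X :=
      ((hasDerivAt_phiD l (X / t)).comp X h1).const_mul _
    have heq := hF.unique hG
    have hs' := hs.ne'
    have ht' := ht.ne'
    have hmul : (∫ θ : ℝ, (1 / σ) * phi (θ / σ) * ((1 / s) * phiD (l + 1) ((X - θ) / s))) =
        s * ((1 / s) * ∫ θ : ℝ, (1 / σ) * phi (θ / σ) * ((1 / s) * phiD (l + 1) ((X - θ) / s))) := by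
      field_simp
    rw [hmul, heq, pow_succ s, pow_succ t]
    field_simp
    ring

/-- Convolution of the `N(0,σ²)` density with the scaled `l`-th Gaussian derivative. -/
theorem gaussian_deriv_convolution (X s σ : ℝ) (hs : 0 < s) (hσ : 0 < σ) (l : ℕ) :
    ∫ θ : ℝ, (1 / σ) * phi (θ / σ) * ((1 / s) * phiD l ((X - θ) / s)) =
      s ^ l / (Real.sqrt (σ ^ 2 + s ^ 2)) ^ (l + 1) *
        phiD l (X / Real.sqrt (σ ^ 2 + s ^ 2)) := by
  exact conv_key hs hσ l X
end

section
/- Let h_l denote the probabilists' Hermite polynomial of degree l. If X is a real Gaussian random variable with mean μ and variance σ² > 0, then for every natural number l, E[h_l(X)] = μ^l + Σ_{k=1}^{⌊l/2⌋} C(l, 2k) · μ^{l−2k} · (σ² − 1)^k · (2k − 1)!!, where C(l,2k) is the binomial coefficient and (2k−1)!! is the double factorial of 2k−1. -/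
open MeasureTheory Real Polynomial Filter Topology

private lemma hermite_derivative (n : ℕ) :
    derivative (Polynomial.hermite (n + 1)) = C ((n : ℤ) + 1) * Polynomial.hermite n := by
  induction n with
  | zero => simp [Polynomial.hermite_one, Polynomial.hermite_zero]
  | succ n ih =>
    rw [Polynomial.hermite_succ (n + 1), derivative_sub, derivative_mul, derivative_X, one_mul, ih,
      derivative_mul, derivative_C, zero_mul, zero_add, Polynomial.hermite_succ n]
    simp only [Nat.cast_succ, Nat.cast_add, Nat.cast_one, C_add, C_1]
    ring

/-- `hermite n` mapped into `ℝ[X]`. -/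
noncomputable def hR (n : ℕ) : ℝ[X] := (Polynomial.hermite n).map (Int.castRingHom ℝ)

private lemma hR_derivative (n : ℕ) :
    derivative (hR (n + 1)) = C ((n : ℝ) + 1) * hR n := by
  rw [hR, derivative_map, hermite_derivative, Polynomial.map_mul, map_C, hR]
  norm_num

private lemma hR_succ (n : ℕ) : hR (n + 1) = X * hR n - derivative (hR n) := by
  rw [hR, hR, Polynomial.hermite_succ, Polynomial.map_sub, Polynomial.map_mul, map_X,
    ← derivative_map]

private lemma hR_zero : hR 0 = 1 := by simp [hR, Polynomial.hermite_zero]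

/-- Integrability of a polynomial against a centered gaussian. -/
private lemma integrable_poly_gauss₀ {b : ℝ} (hb : 0 < b) (p : ℝ[X]) :
    Integrable (fun x : ℝ => p.eval x * Real.exp (-b * x ^ 2)) := by
  induction p using Polynomial.induction_on' with
  | add p q hp hq =>
    simp only [eval_add, add_mul]
    exact hp.add hq
  | monomial n a =>
    simp only [eval_monomial]
    have h : Integrable (fun x : ℝ => x ^ n * Real.exp (-b * x ^ 2)) := by
      have := integrable_rpow_mul_exp_neg_mul_sq hb (s := n) (lt_of_lt_of_le (by norm_num) (Nat.cast_nonneg n))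
      simpa [Real.rpow_natCast] using this
    simpa [mul_assoc] using h.const_mul a

private lemma integrable_shift {f : ℝ → ℝ} (hf : Integrable f) (c : ℝ) :
    Integrable (fun x => f (x - c)) :=
  ((measurePreserving_sub_right volume c).integrable_comp hf.aestronglyMeasurable).mpr hf

private lemma integrable_poly_gauss {b : ℝ} (hb : 0 < b) (c : ℝ) (p : ℝ[X]) :
    Integrable (fun x : ℝ => p.eval x * Real.exp (-b * (x - c) ^ 2)) := by
  have h := integrable_shift (integrable_poly_gauss₀ hb (p.comp (X + Polynomial.C c))) c
  refine h.congr (Filter.Eventually.of_forall fun x => ?_)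
  simp [eval_comp, sub_add_cancel]

private lemma tendsto_poly_gauss_atTop₀ {b : ℝ} (hb : 0 < b) (p : ℝ[X]) :
    Tendsto (fun x : ℝ => p.eval x * Real.exp (-b * x ^ 2)) atTop (𝓝 0) := by
  have h1 := p.tendsto_div_exp_atTop
  have h2 : Tendsto (fun x : ℝ => Real.exp (x - b * x ^ 2)) atTop (𝓝 0) := by
    apply Real.tendsto_exp_atBot.comp
    have hev : (fun x : ℝ => x - b * x ^ 2) ≤ᶠ[atTop] (fun x : ℝ => -x) := by
      filter_upwards [eventually_ge_atTop (max 1 (2 / b))] with x hx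
      have h1 : (1 : ℝ) ≤ x := le_trans (le_max_left _ _) hx
      have h2 : 2 / b ≤ x := le_trans (le_max_right _ _) hx
      rw [div_le_iff₀ hb] at h2
      nlinarith
    exact tendsto_atBot_mono' atTop hev tendsto_neg_atTop_atBot
  have := h1.mul h2
  rw [mul_zero] at this
  refine this.congr (fun x => ?_)
  rw [sub_eq_add_neg, Real.exp_add, div_mul_eq_mul_div, mul_comm (Real.exp x),
    mul_div_assoc, mul_div_cancel_right₀ _ (Real.exp_ne_zero x), neg_mul]

private lemma tendsto_poly_gauss_atTop {b : ℝ} (hb : 0 < b) (c : ℝ) (p : ℝ[X]) :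
    Tendsto (fun x : ℝ => p.eval x * Real.exp (-b * (x - c) ^ 2)) atTop (𝓝 0) := by
  have h := (tendsto_poly_gauss_atTop₀ hb (p.comp (X + Polynomial.C c))).comp
    (tendsto_atTop_add_const_right atTop (-c) tendsto_id)
  refine h.congr fun x => ?_
  simp [Function.comp, eval_comp, sub_eq_add_neg]

private lemma tendsto_poly_gauss_atBot {b : ℝ} (hb : 0 < b) (c : ℝ) (p : ℝ[X]) :
    Tendsto (fun x : ℝ => p.eval x * Real.exp (-b * (x - c) ^ 2)) atBot (𝓝 0) := by
  have h := (tendsto_poly_gauss_atTop hb (-c) (p.comp (-X))).comp tendsto_neg_atBot_atTop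
  refine h.congr fun x => ?_
  simp only [Function.comp_apply, eval_comp, eval_neg, eval_X, neg_neg]
  rw [show (-x - -c : ℝ) ^ 2 = (x - c) ^ 2 by ring]

private lemma my_integral_deriv_eq_zero {f f' : ℝ → ℝ} (hderiv : ∀ x, HasDerivAt f (f' x) x)
    (hint : Integrable f') (htop : Tendsto f atTop (𝓝 0)) (hbot : Tendsto f atBot (𝓝 0)) :
    ∫ x, f' x = 0 := by
  have h1 : ∫ x in Set.Iic (0:ℝ), f' x = f 0 - 0 :=
    integral_Iic_of_hasDerivAt_of_tendsto (hderiv 0).continuousAt.continuousWithinAt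
      (fun x _ => hderiv x) hint.integrableOn hbot
  have h2 : ∫ x in Set.Ioi (0:ℝ), f' x = 0 - f 0 :=
    integral_Ioi_of_hasDerivAt_of_tendsto (hderiv 0).continuousAt.continuousWithinAt
      (fun x _ => hderiv x) hint.integrableOn htop
  rw [← intervalIntegral.integral_Iic_add_Ioi (b := (0:ℝ)) hint.integrableOn hint.integrableOn, h1, h2]
  ring


noncomputable def dens (μ σ : ℝ) (x : ℝ) : ℝ :=
  (σ * Real.sqrt (2 * Real.pi))⁻¹ * Real.exp (-(x - μ) ^ 2 / (2 * σ ^ 2))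

private lemma exp_arg_eq (μ σ x : ℝ) :
    -(x - μ) ^ 2 / (2 * σ ^ 2) = -(2 * σ ^ 2)⁻¹ * (x - μ) ^ 2 := by ring

private lemma integrable_poly_dens {σ : ℝ} (μ : ℝ) (hσ : 0 < σ) (Q : ℝ[X]) :
    Integrable (fun x => Q.eval x * dens μ σ x) := by
  have hb : (0:ℝ) < (2 * σ ^ 2)⁻¹ := by positivity
  have h := (integrable_poly_gauss hb μ Q).const_mul (σ * Real.sqrt (2 * Real.pi))⁻¹
  refine h.congr (Filter.Eventually.of_forall fun x => ?_)
  simp only [dens, exp_arg_eq]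
  ring

private lemma tendsto_poly_dens_atTop {σ : ℝ} (μ : ℝ) (hσ : 0 < σ) (Q : ℝ[X]) :
    Tendsto (fun x => Q.eval x * dens μ σ x) atTop (𝓝 0) := by
  have hb : (0:ℝ) < (2 * σ ^ 2)⁻¹ := by positivity
  have h := ((tendsto_poly_gauss_atTop hb μ Q).const_mul (σ * Real.sqrt (2 * Real.pi))⁻¹)
  rw [mul_zero] at h
  refine h.congr fun x => ?_
  simp only [dens, exp_arg_eq]
  ring

private lemma tendsto_poly_dens_atBot {σ : ℝ} (μ : ℝ) (hσ : 0 < σ) (Q : ℝ[X]) :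
    Tendsto (fun x => Q.eval x * dens μ σ x) atBot (𝓝 0) := by
  have hb : (0:ℝ) < (2 * σ ^ 2)⁻¹ := by positivity
  have h := ((tendsto_poly_gauss_atBot hb μ Q).const_mul (σ * Real.sqrt (2 * Real.pi))⁻¹)
  rw [mul_zero] at h
  refine h.congr fun x => ?_
  simp only [dens, exp_arg_eq]
  ring

private lemma hasDerivAt_dens {σ : ℝ} (μ : ℝ) (hσ : 0 < σ) (x : ℝ) :
    HasDerivAt (dens μ σ) (dens μ σ x * (-(x - μ) / σ ^ 2)) x := by
  have h1 : HasDerivAt (fun x : ℝ => -(x - μ) ^ 2 / (2 * σ ^ 2)) (-(x - μ) / σ ^ 2) x := by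
    have h0 : HasDerivAt (fun x : ℝ => x - μ) 1 x := (hasDerivAt_id x).sub_const μ
    have h2 := ((h0.pow 2).neg).div_const (2 * σ ^ 2)
    refine h2.congr_deriv ?_
    have : σ ^ 2 ≠ 0 := by positivity
    field_simp
    ring
  have h3 := (h1.exp).const_mul (σ * Real.sqrt (2 * Real.pi))⁻¹
  refine h3.congr_deriv ?_
  rw [dens]
  ring

private lemma key_ibp {σ : ℝ} (μ : ℝ) (hσ : 0 < σ) (P : ℝ[X]) :
    ∫ x, (X * P).eval x * dens μ σ x =
      μ * (∫ x, P.eval x * dens μ σ x) + σ ^ 2 * ∫ x, (derivative P).eval x * dens μ σ x := by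
  have hσ2 : (σ:ℝ) ^ 2 ≠ 0 := by positivity
  set f' : ℝ → ℝ := fun x =>
    (derivative P).eval x * dens μ σ x + P.eval x * (dens μ σ x * (-(x - μ) / σ ^ 2)) with hf'
  have e1 : ∀ x, f' x = (derivative P).eval x * dens μ σ x -
      (σ ^ 2)⁻¹ * (((X - Polynomial.C μ) * P).eval x * dens μ σ x) := by
    intro x
    simp only [hf', eval_mul, eval_sub, eval_X, eval_C]
    ring
  have hI1 : Integrable fun x => (derivative P).eval x * dens μ σ x :=
    integrable_poly_dens μ hσ _
  have hI2 : Integrable fun x => ((X - Polynomial.C μ) * P).eval x * dens μ σ x :=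
    integrable_poly_dens μ hσ _
  have hIf' : Integrable f' := by
    refine (hI1.sub (hI2.const_mul (σ ^ 2)⁻¹)).congr
      (Filter.Eventually.of_forall fun x => (e1 x).symm)
  have hderiv : ∀ x, HasDerivAt (fun x => P.eval x * dens μ σ x) (f' x) x := fun x =>
    (P.hasDerivAt x).mul (hasDerivAt_dens μ hσ x)
  have h0 : ∫ x, f' x = 0 :=
    my_integral_deriv_eq_zero hderiv hIf' (tendsto_poly_dens_atTop μ hσ P)
      (tendsto_poly_dens_atBot μ hσ P)
  rw [integral_congr_ae (Filter.Eventually.of_forall e1),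
    integral_sub hI1 (hI2.const_mul _), integral_const_mul] at h0
  have hXP : ∫ x, ((X - Polynomial.C μ) * P).eval x * dens μ σ x =
      (∫ x, (X * P).eval x * dens μ σ x) - μ * ∫ x, P.eval x * dens μ σ x := by
    have hI3 : Integrable fun x => (X * P).eval x * dens μ σ x := integrable_poly_dens μ hσ _
    have hI4 : Integrable fun x => P.eval x * dens μ σ x := integrable_poly_dens μ hσ _
    rw [← integral_const_mul, ← integral_sub hI3 (hI4.const_mul μ)]
    refine integral_congr_ae (Filter.Eventually.of_forall fun x => ?_)
    simp only [eval_mul, eval_sub, eval_X, eval_C]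
    ring
  rw [hXP] at h0
  simp only [eval_mul, eval_X] at h0 ⊢
  field_simp at h0
  linarith

/-- The probabilists' Hermite polynomial of degree `l`, evaluated at a real `x`. -/
noncomputable def hermiteR (l : ℕ) (x : ℝ) : ℝ := Polynomial.aeval x (Polynomial.hermite l)

private lemma hermiteR_eq (l : ℕ) (x : ℝ) : hermiteR l x = (hR l).eval x := by
  rw [hermiteR, hR, Polynomial.aeval_def, Polynomial.eval_map, algebraMap_int_eq]

private lemma integral_dens (μ : ℝ) {σ : ℝ} (hσ : 0 < σ) : ∫ x, dens μ σ x = 1 := by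
  have hv : (⟨σ ^ 2, sq_nonneg σ⟩ : NNReal) ≠ 0 := by
    intro h
    have h2 := congrArg NNReal.toReal h
    change σ ^ 2 = 0 at h2
    nlinarith
  have h := ProbabilityTheory.integral_gaussianPDFReal_eq_one μ hv
  rw [← h]
  refine integral_congr_ae (Filter.Eventually.of_forall fun x => ?_)
  rw [dens]
  change _ = (√(2 * π * σ ^ 2))⁻¹ * rexp (-(x - μ) ^ 2 / (2 * σ ^ 2))
  rw [show Real.sqrt (2 * π * σ ^ 2) = σ * Real.sqrt (2 * π) by
    rw [Real.sqrt_mul (by positivity), Real.sqrt_sq hσ.le]; ring]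

private lemma moment_zero (μ : ℝ) {σ : ℝ} (hσ : 0 < σ) :
    ∫ x, (hR 0).eval x * dens μ σ x = 1 := by
  rw [← integral_dens μ hσ]
  refine integral_congr_ae (Filter.Eventually.of_forall fun x => ?_)
  rw [hR_zero]
  simp

private lemma moment_one (μ : ℝ) {σ : ℝ} (hσ : 0 < σ) :
    ∫ x, (hR 1).eval x * dens μ σ x = μ := by
  have h1 : hR 1 = X * 1 := by
    rw [hR, Polynomial.hermite_one]; simp
  rw [h1, key_ibp μ hσ 1]
  simp only [derivative_one, eval_zero, zero_mul, integral_zero, mul_zero, add_zero, eval_one,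
    one_mul]
  rw [integral_dens μ hσ, mul_one]

private lemma moment_rec (μ : ℝ) {σ : ℝ} (hσ : 0 < σ) (n : ℕ) :
    ∫ x, (hR (n + 2)).eval x * dens μ σ x =
      μ * (∫ x, (hR (n + 1)).eval x * dens μ σ x) +
        ((n : ℝ) + 1) * (σ ^ 2 - 1) * ∫ x, (hR n).eval x * dens μ σ x := by
  have hsplit : ∫ x, (hR (n + 2)).eval x * dens μ σ x =
      (∫ x, (X * hR (n + 1)).eval x * dens μ σ x) -
        ((n : ℝ) + 1) * ∫ x, (hR n).eval x * dens μ σ x := by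
    rw [← integral_const_mul, ← integral_sub (integrable_poly_dens μ hσ _)
      ((integrable_poly_dens μ hσ (hR n)).const_mul _)]
    refine integral_congr_ae (Filter.Eventually.of_forall fun x => ?_)
    rw [hR_succ (n + 1), hR_derivative n]
    simp only [eval_sub, eval_mul, eval_X, eval_C]
    ring
  have hD : ∫ x, (derivative (hR (n + 1))).eval x * dens μ σ x =
      ((n : ℝ) + 1) * ∫ x, (hR n).eval x * dens μ σ x := by
    rw [← integral_const_mul]
    refine integral_congr_ae (Filter.Eventually.of_forall fun x => ?_)
    rw [hR_derivative n]
    simp only [eval_mul, eval_C]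
    ring
  rw [hsplit, key_ibp μ hσ (hR (n + 1)), hD]
  ring

noncomputable def Tt (μ v : ℝ) (l k : ℕ) : ℝ :=
  (l.choose (2 * k) : ℝ) * μ ^ (l - 2 * k) * v ^ k * ((2 * k - 1).doubleFactorial : ℝ)

noncomputable def Mm (μ v : ℝ) (l : ℕ) : ℝ := ∑ k ∈ Finset.range (l + 1), Tt μ v l k

private lemma Tt_eq_zero {μ v : ℝ} {l k : ℕ} (h : l < 2 * k) : Tt μ v l k = 0 := by
  simp [Tt, Nat.choose_eq_zero_of_lt h]

private lemma Tt_zero' (μ v : ℝ) (l : ℕ) : Tt μ v l 0 = μ ^ l := by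
  simp [Tt, Nat.doubleFactorial]

private lemma Mm_zero (μ v : ℝ) : Mm μ v 0 = 1 := by
  simp [Mm, Tt, Nat.doubleFactorial]

private lemma Mm_one (μ v : ℝ) : Mm μ v 1 = μ := by
  rw [Mm]
  rw [Finset.sum_range_succ, Finset.sum_range_succ, Finset.sum_range_zero]
  rw [Tt_zero', Tt_eq_zero (by omega)]
  simp

private lemma keyR (n j : ℕ) :
    ((n + 1).choose (2 * j + 1) : ℝ) * ((2 * j + 1).doubleFactorial : ℝ) =
      ((n : ℝ) + 1) * (n.choose (2 * j) : ℝ) * ((2 * j - 1).doubleFactorial : ℝ) := by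
  have h : ((n + 1) * n.choose (2 * j) : ℕ) = (n + 1).choose (2 * j + 1) * (2 * j + 1) := by
    simpa using Nat.add_one_mul_choose_eq n (2 * j)
  have h' : ((n : ℝ) + 1) * (n.choose (2 * j) : ℝ) =
      ((n + 1).choose (2 * j + 1) : ℝ) * (2 * (j : ℝ) + 1) := by
    exact_mod_cast congrArg (Nat.cast : ℕ → ℝ) h
  have hd : ((2 * j + 1).doubleFactorial : ℝ) =
      (2 * (j : ℝ) + 1) * ((2 * j - 1).doubleFactorial : ℝ) := by
    rw [Nat.doubleFactorial_add_one]
    push_cast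
    ring
  rw [hd]
  linear_combination (-((2 * j - 1).doubleFactorial : ℝ)) * h'

private lemma Tt_step (μ v : ℝ) (n j : ℕ) :
    Tt μ v (n + 2) (j + 1) = μ * Tt μ v (n + 1) (j + 1) + ((n : ℝ) + 1) * v * Tt μ v n j := by
  have hch : ((n + 2).choose (2 * j + 2) : ℝ) =
      ((n + 1).choose (2 * j + 1) : ℝ) + ((n + 1).choose (2 * j + 2) : ℝ) := by
    exact_mod_cast congrArg (Nat.cast : ℕ → ℝ) (Nat.choose_succ_succ' (n + 1) (2 * j + 1))
  by_cases hj : 2 * j + 2 ≤ n + 1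
  · have hpow : μ * μ ^ (n + 1 - (2 * j + 2)) = μ ^ (n - 2 * j) := by
      rw [← pow_succ']
      congr 1
      omega
    simp only [Tt, show 2 * (j + 1) = 2 * j + 2 from by ring, hch,
      show n + 2 - (2 * j + 2) = n - 2 * j from by omega,
      show 2 * j + 2 - 1 = 2 * j + 1 from by omega, pow_succ v j]
    linear_combination (μ ^ (n - 2 * j) * (v ^ j * v)) * keyR n j -
      (((n + 1).choose (2 * j + 2) : ℝ) * (v ^ j * v) * ((2 * j + 1).doubleFactorial : ℝ)) * hpow
  · have hz : (n + 1).choose (2 * j + 2) = 0 := Nat.choose_eq_zero_of_lt (by omega)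
    simp only [Tt, show 2 * (j + 1) = 2 * j + 2 from by ring, hch, hz, Nat.cast_zero,
      show n + 2 - (2 * j + 2) = n - 2 * j from by omega,
      show 2 * j + 2 - 1 = 2 * j + 1 from by omega, pow_succ v j]
    linear_combination (μ ^ (n - 2 * j) * (v ^ j * v)) * keyR n j

private lemma Mm_rec (μ v : ℝ) (n : ℕ) :
    Mm μ v (n + 2) = μ * Mm μ v (n + 1) + ((n : ℝ) + 1) * v * Mm μ v n := by
  have pad1 : Mm μ v (n + 1) = ∑ k ∈ Finset.range (n + 3), Tt μ v (n + 1) k := by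
    rw [Mm]
    refine Finset.sum_subset (Finset.range_subset_range.2 (by omega)) fun k hk hk' => ?_
    refine Tt_eq_zero (by simp only [Finset.mem_range] at hk hk'; omega)
  have pad0 : Mm μ v n = ∑ k ∈ Finset.range (n + 2), Tt μ v n k := by
    rw [Mm]
    refine Finset.sum_subset (Finset.range_subset_range.2 (by omega)) fun k hk hk' => ?_
    refine Tt_eq_zero (by simp only [Finset.mem_range] at hk hk'; omega)
  rw [Mm, pad1, pad0, Finset.mul_sum, Finset.mul_sum]
  rw [Finset.sum_range_succ' (fun k => Tt μ v (n + 2) k) (n + 2),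
    Finset.sum_range_succ' (fun k => μ * Tt μ v (n + 1) k) (n + 2)]
  have h00 : Tt μ v (n + 2) 0 = μ * Tt μ v (n + 1) 0 := by
    rw [Tt_zero', Tt_zero', pow_succ']
  have main : ∑ i ∈ Finset.range (n + 2), Tt μ v (n + 2) (i + 1) =
      ∑ i ∈ Finset.range (n + 2),
        (μ * Tt μ v (n + 1) (i + 1) + ((n : ℝ) + 1) * v * Tt μ v n i) :=
    Finset.sum_congr rfl fun j _ => Tt_step μ v n j
  rw [Finset.sum_add_distrib] at main
  rw [h00]
  linarith [main]

private lemma Mm_eq_RHS (μ v : ℝ) (l : ℕ) :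
    Mm μ v l = μ ^ l + ∑ k ∈ Finset.Icc 1 (l / 2),
      (l.choose (2 * k) : ℝ) * μ ^ (l - 2 * k) * v ^ k *
        ((2 * k - 1).doubleFactorial : ℝ) := by
  rw [Mm, Finset.sum_range_succ' (fun k => Tt μ v l k) l, Tt_zero']
  have h1 : ∑ i ∈ Finset.range l, Tt μ v l (i + 1) =
      ∑ i ∈ Finset.range (l / 2), Tt μ v l (i + 1) := by
    refine (Finset.sum_subset (Finset.range_subset_range.2 (by omega)) fun k hk hk' => ?_).symm
    refine Tt_eq_zero (by simp only [Finset.mem_range] at hk hk'; omega)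
  have h2 : ∑ k ∈ Finset.Icc 1 (l / 2),
      (l.choose (2 * k) : ℝ) * μ ^ (l - 2 * k) * v ^ k * ((2 * k - 1).doubleFactorial : ℝ) =
      ∑ i ∈ Finset.range (l / 2), Tt μ v l (1 + i) := by
    rw [← Finset.Ico_add_one_right_eq_Icc, Finset.sum_Ico_eq_sum_range]
    simp only [Nat.succ_sub_one, Nat.add_sub_cancel, Tt]
  rw [h1, h2]
  rw [add_comm]
  congr 1
  exact Finset.sum_congr rfl fun i _ => by rw [add_comm 1 i]

/-- Hermite moments of a Gaussian: if `X ~ N(μ, σ²)` then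
`E[h_l(X)] = μ^l + Σ_{k=1}^{⌊l/2⌋} C(l,2k) μ^{l−2k} (σ²−1)^k (2k−1)!!`,
with the expectation written as the integral of `h_l` against the `N(μ,σ²)` density. -/
theorem hermite_moment_gaussian (μ σ : ℝ) (hσ : 0 < σ) (l : ℕ) :
    ∫ x : ℝ, hermiteR l x *
        ((σ * Real.sqrt (2 * Real.pi))⁻¹ * Real.exp (-(x - μ) ^ 2 / (2 * σ ^ 2))) =
      μ ^ l + ∑ k ∈ Finset.Icc 1 (l / 2),
        (l.choose (2 * k) : ℝ) * μ ^ (l - 2 * k) * (σ ^ 2 - 1) ^ k *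
          (Nat.doubleFactorial (2 * k - 1) : ℝ) := by
  have hfun : (fun x : ℝ => hermiteR l x *
      ((σ * Real.sqrt (2 * Real.pi))⁻¹ * Real.exp (-(x - μ) ^ 2 / (2 * σ ^ 2)))) =
      fun x => (hR l).eval x * dens μ σ x := by
    funext x
    rw [hermiteR_eq]
    rfl
  rw [hfun]
  have key : ∀ n : ℕ, (∫ x, (hR n).eval x * dens μ σ x) = Mm μ (σ ^ 2 - 1) n := by
    intro n
    induction n using Nat.twoStepInduction with
    | zero => rw [moment_zero μ hσ, Mm_zero]
    | one => rw [moment_one μ hσ, Mm_one]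
    | more n ih1 ih2 => rw [moment_rec μ hσ n, Mm_rec, ih1, ih2]
  rw [key l, Mm_eq_RHS]
end

section
/- (Mehler's identity.) Let φ denote the standard Gaussian density and φ^{(l)} its l-th derivative. For every ρ with |ρ| < 1 and all real x, y, the bivariate standard Gaussian density with correlation ρ admits the expansion (1 / (2π√(1 − ρ²))) · exp( −(x² − 2ρxy + y²) / (2(1 − ρ²)) ) = φ(x)φ(y) + Σ_{l=1}^∞ (ρ^l / l!) · φ^{(l)}(x) · φ^{(l)}(y), where the series converges. -/
open MeasureTheory Real

namespace Mehler
open Complex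

noncomputable def G : ℂ → ℂ := fun z => Complex.exp (-z ^ 2 / 2)

lemma G_diff : Differentiable ℂ G := by
  unfold G
  exact (((differentiable_id.pow 2).neg).div_const 2).cexp

lemma G_contDiff : ContDiff ℂ (⊤ : ℕ∞) G :=
  (Complex.analyticOnNhd_univ_iff_differentiable.mpr G_diff).contDiff

lemma g_diff (n : ℕ) : Differentiable ℂ (iteratedDeriv n G) :=
  G_contDiff.differentiable_iteratedDeriv n (by exact_mod_cast WithTop.coe_lt_top n)

lemma hasDerivAt_g_real (n : ℕ) (t : ℝ) :
    HasDerivAt (fun r : ℝ => iteratedDeriv n G r) (iteratedDeriv (n + 1) G t) t := by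
  have h := ((g_diff n) (t : ℂ)).hasDerivAt
  have h2 : deriv (iteratedDeriv n G) (t : ℂ) = iteratedDeriv (n + 1) G t := by
    rw [iteratedDeriv_succ]
  exact h2 ▸ h.comp_ofReal

lemma contDiff_phi : ContDiff ℝ (⊤ : ℕ∞) phi := by
  unfold phi
  exact contDiff_const.mul (((contDiff_id.pow 2).neg.div_const 2).exp)

lemma hasDerivAt_phiD (n : ℕ) (t : ℝ) : HasDerivAt (phiD n) (phiD (n + 1) t) t := by
  have hd : Differentiable ℝ (iteratedDeriv n phi) :=
    contDiff_phi.differentiable_iteratedDeriv n (by exact_mod_cast WithTop.coe_lt_top n)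
  have h := (hd t).hasDerivAt
  have h2 : deriv (iteratedDeriv n phi) t = phiD (n + 1) t := by
    rw [phiD, iteratedDeriv_succ]
  exact h2 ▸ h

lemma phiD_eq (n : ℕ) (t : ℝ) :
    (phiD n t : ℂ) = ((Real.sqrt (2 * Real.pi) : ℝ) : ℂ)⁻¹ * iteratedDeriv n G t := by
  induction n generalizing t with
  | zero =>
    simp only [phiD, iteratedDeriv_zero, phi, G]
    push_cast
    ring
  | succ n ih =>
    have h1 : HasDerivAt (fun r : ℝ => (phiD n r : ℂ)) ((phiD (n + 1) t : ℂ)) t :=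
      (hasDerivAt_phiD n t).ofReal_comp
    have h2 : HasDerivAt (fun r : ℝ => ((Real.sqrt (2 * Real.pi) : ℝ) : ℂ)⁻¹ * iteratedDeriv n G r)
        (((Real.sqrt (2 * Real.pi) : ℝ) : ℂ)⁻¹ * iteratedDeriv (n + 1) G t) t :=
      (hasDerivAt_g_real n t).const_mul _
    have hfun : (fun r : ℝ => (phiD n r : ℂ)) =
        (fun r : ℝ => ((Real.sqrt (2 * Real.pi) : ℝ) : ℂ)⁻¹ * iteratedDeriv n G r) := funext fun r => ih r
    rw [hfun] at h1
    exact h1.unique h2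



lemma pow_le_fact_mul_exp {x : ℝ} (hx : 0 ≤ x) (n : ℕ) : x ^ n ≤ n.factorial * Real.exp x := by
  have h1 : x ^ n / n.factorial ≤ Real.exp x := by
    calc x ^ n / n.factorial ≤ ∑ i ∈ Finset.range (n + 1), x ^ i / i.factorial := by
          exact Finset.single_le_sum (f := fun i => x ^ i / (i.factorial : ℝ))
            (fun i _ => by positivity) (Finset.self_mem_range_succ n)
      _ ≤ Real.exp x := Real.sum_le_exp_of_nonneg hx _
  have hf : (0 : ℝ) < n.factorial := by exact_mod_cast n.factorial_pos
  calc x ^ n = n.factorial * (x ^ n / n.factorial) := by field_simp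
    _ ≤ n.factorial * Real.exp x := by
        exact mul_le_mul_of_nonneg_left h1 hf.le

lemma exp_one_le_pow {n : ℕ} (hn : 1 ≤ n) : Real.exp 1 ≤ (1 + 1 / (n : ℝ)) ^ (n + 1) := by
  have hn' : (0 : ℝ) < n := by exact_mod_cast hn
  have h1 : Real.exp (1 / ((n : ℝ) + 1)) ≤ 1 + 1 / n := by
    have hx : (1 : ℝ) / (n + 1) < 1 := by
      rw [div_lt_one (by positivity)]; linarith
    have h2 : 1 - 1 / ((n : ℝ) + 1) ≤ Real.exp (-(1 / ((n : ℝ) + 1))) := by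
      have := Real.add_one_le_exp (-(1 / ((n : ℝ) + 1)))
      linarith
    have h3 : (0 : ℝ) < 1 - 1 / ((n : ℝ) + 1) := by
      rw [sub_pos]; exact hx
    have h4 : Real.exp (1 / ((n : ℝ) + 1)) ≤ (1 - 1 / ((n : ℝ) + 1))⁻¹ := by
      rw [Real.exp_neg] at h2
      rw [← inv_inv (Real.exp (1 / ((n : ℝ) + 1)))]
      exact inv_anti₀ h3 h2
    refine h4.trans ?_
    have : (1 - 1 / ((n : ℝ) + 1))⁻¹ = (n + 1) / n := by
      field_simp
      simp [hn'.ne']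
    rw [this]
    have : ((n : ℝ) + 1) / n = 1 + 1 / n := by field_simp
    rw [this]
  calc Real.exp 1 = Real.exp (1 / ((n : ℝ) + 1)) ^ (n + 1) := by
        rw [← Real.exp_nat_mul]
        congr 1
        field_simp
        norm_cast
    _ ≤ (1 + 1 / (n : ℝ)) ^ (n + 1) := by
        apply pow_le_pow_left₀ (Real.exp_pos _).le h1

lemma fact_mul_exp_le {n : ℕ} (hn : 1 ≤ n) :
    (n.factorial : ℝ) * Real.exp n ≤ Real.exp 1 * (n : ℝ) ^ (n + 1) := by
  induction n with
  | zero => omega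
  | succ m ih =>
    rcases Nat.eq_or_lt_of_le hn with h | h
    · simp [← h]
    · have hm : 1 ≤ m := by omega
      have ihm := ih hm
      have hm' : (0 : ℝ) < m := by exact_mod_cast hm
      have key : Real.exp 1 * (m : ℝ) ^ (m + 1) * ((m : ℝ) + 1) * Real.exp 1 ≤
          Real.exp 1 * ((m : ℝ) + 1) ^ (m + 2) := by
        have h5 := exp_one_le_pow hm
        have expand : (1 + 1 / (m : ℝ)) ^ (m + 1) = ((m : ℝ) + 1) ^ (m + 1) / (m : ℝ) ^ (m + 1) := by
          rw [← div_pow]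
          congr 1
          field_simp
        rw [expand] at h5
        have h6 : Real.exp 1 * (m : ℝ) ^ (m + 1) ≤ ((m : ℝ) + 1) ^ (m + 1) := by
          rw [← le_div_iff₀ (by positivity)]
          exact h5
        calc Real.exp 1 * (m : ℝ) ^ (m + 1) * ((m : ℝ) + 1) * Real.exp 1
            = (Real.exp 1 * (m : ℝ) ^ (m + 1)) * (((m : ℝ) + 1) * Real.exp 1) := by ring
          _ ≤ ((m : ℝ) + 1) ^ (m + 1) * (((m : ℝ) + 1) * Real.exp 1) := by
              apply mul_le_mul_of_nonneg_right h6 (by positivity)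
          _ = Real.exp 1 * ((m : ℝ) + 1) ^ (m + 2) := by ring
      push_cast
      calc ((m + 1).factorial : ℝ) * Real.exp ((m : ℝ) + 1)
          = ((m : ℝ) + 1) * ((m.factorial : ℝ) * Real.exp m) * Real.exp 1 := by
            rw [Nat.factorial_succ]
            push_cast
            rw [Real.exp_add]
            ring
        _ ≤ ((m : ℝ) + 1) * (Real.exp 1 * (m : ℝ) ^ (m + 1)) * Real.exp 1 := by
            apply mul_le_mul_of_nonneg_right (mul_le_mul_of_nonneg_left ihm (by positivity)) (Real.exp_pos _).le
        _ = Real.exp 1 * (m : ℝ) ^ (m + 1) * ((m : ℝ) + 1) * Real.exp 1 := by ring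
        _ ≤ Real.exp 1 * ((m : ℝ) + 1) ^ (m + 2) := key
        _ = Real.exp 1 * ((m : ℝ) + 1) ^ (m + 1 + 1) := by norm_num
lemma norm_G_le (x : ℝ) {R : ℝ} (hR : 0 ≤ R) (z : ℂ) (hz : dist z (x : ℂ) = R) :
    ‖G z‖ ≤ Real.exp (R ^ 2 / 2) := by
  have him : |z.im| ≤ R := by
    have : |(z - (x : ℂ)).im| ≤ ‖z - (x : ℂ)‖ := Complex.abs_im_le_norm _
    rw [← Complex.dist_eq] at this
    simpa using this.trans hz.le
  have : ‖G z‖ = Real.exp ((z.im ^ 2 - z.re ^ 2) / 2) := by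
    rw [G, Complex.norm_exp]
    congr 1
    simp [Complex.div_re, Complex.normSq, Complex.sub_re, Complex.neg_re, pow_two]
  rw [this]
  apply Real.exp_le_exp.2
  have h1 : z.im ^ 2 ≤ R ^ 2 := by
    rw [← _root_.sq_abs]
    exact pow_le_pow_left₀ (abs_nonneg _) him 2
  nlinarith [sq_nonneg z.re]

lemma g_bound (n : ℕ) (x : ℝ) {R : ℝ} (hR : 0 < R) :
    ‖iteratedDeriv n G (x : ℂ)‖ ≤ n.factorial * Real.exp (R ^ 2 / 2) / R ^ n := by
  lift R to NNReal using hR.le with R' hR'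
  have hR0 : 0 < R' := by exact_mod_cast hR
  have hp : HasFPowerSeriesOnBall G (cauchyPowerSeries G (x : ℂ) R') (x : ℂ) R' :=
    G_diff.differentiableOn.hasFPowerSeriesOnBall hR0
  have h1 : iteratedDeriv n G (x : ℂ) =
      n.factorial • (cauchyPowerSeries G (x : ℂ) R' n fun _ => (1 : ℂ)) := by
    rw [iteratedDeriv_eq_iteratedFDeriv, ← hp.factorial_smul (1 : ℂ) n]
  rw [h1]
  have h2 : ‖(cauchyPowerSeries G (x : ℂ) R' n fun _ => (1 : ℂ))‖ ≤
      ‖cauchyPowerSeries G (x : ℂ) R' n‖ := by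
    have := (cauchyPowerSeries G (x : ℂ) R' n).le_opNorm fun _ => (1 : ℂ)
    simpa using this
  have h3 : ‖cauchyPowerSeries G (x : ℂ) R' n‖ ≤ Real.exp ((R' : ℝ) ^ 2 / 2) * |(R' : ℝ)|⁻¹ ^ n := by
    refine (norm_cauchyPowerSeries_le G (x : ℂ) R' n).trans ?_
    gcongr ?_ * _
    have hle : ∫ θ : ℝ in (0)..2 * π, ‖G (circleMap (x : ℂ) R' θ)‖ ≤
        ∫ _ : ℝ in (0)..2 * π, Real.exp ((R' : ℝ) ^ 2 / 2) := by
      apply intervalIntegral.integral_mono_on Real.two_pi_pos.le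
      · apply Continuous.intervalIntegrable
        have : Continuous fun θ : ℝ => G (circleMap (x : ℂ) R' θ) :=
          G_diff.continuous.comp (continuous_circleMap _ _)
        exact this.norm
      · exact intervalIntegrable_const
      · intro θ _
        exact norm_G_le x (R'.coe_nonneg) _ (by simp [circleMap, Complex.dist_eq, _root_.abs_of_nonneg R'.coe_nonneg])
    rw [intervalIntegral.integral_const] at hle
    calc (2 * π)⁻¹ * ∫ θ : ℝ in (0)..2 * π, ‖G (circleMap (x : ℂ) R' θ)‖
        ≤ (2 * π)⁻¹ * ((2 * π - 0) • Real.exp ((R' : ℝ) ^ 2 / 2)) := by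
          apply mul_le_mul_of_nonneg_left hle
          positivity
      _ = Real.exp ((R' : ℝ) ^ 2 / 2) := by
          rw [smul_eq_mul, sub_zero]
          field_simp
  calc ‖n.factorial • (cauchyPowerSeries G (x : ℂ) R' n fun _ => (1 : ℂ))‖
      = n.factorial * ‖(cauchyPowerSeries G (x : ℂ) R' n fun _ => (1 : ℂ))‖ := by
        rw [nsmul_eq_mul, norm_mul]
        simp
    _ ≤ n.factorial * (Real.exp ((R' : ℝ) ^ 2 / 2) * |(R' : ℝ)|⁻¹ ^ n) := by
        exact mul_le_mul_of_nonneg_left (h2.trans h3) (by positivity)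
    _ = n.factorial * Real.exp ((R' : ℝ) ^ 2 / 2) / (R' : ℝ) ^ n := by
        rw [_root_.abs_of_nonneg R'.coe_nonneg, inv_pow]
        ring


lemma norm_integrand (n : ℕ) (y : ℝ) (s : ℝ) :
    ‖(I * (s : ℂ)) ^ n * Complex.exp (I * s * y - s ^ 2 / 2)‖ = |s| ^ n * Real.exp (-s ^ 2 / 2) := by
  rw [norm_mul, norm_pow, Complex.norm_exp]
  congr 2
  · simp
  · simp [Complex.sub_re, Complex.mul_re, Complex.div_re, Complex.normSq, ← Complex.ofReal_pow,
      Complex.ofReal_re]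
    ring

lemma integrable_gauss_shift (σ : ℝ) :
    Integrable (fun s : ℝ => Real.exp (-(s - σ) ^ 2 / 2)) := by
  have h0 : Integrable (fun u : ℝ => Real.exp (-(1/2) * u ^ 2)) :=
    integrable_exp_neg_mul_sq one_half_pos
  have h1 := h0.comp_sub_right σ
  have : (fun s : ℝ => Real.exp (-(s - σ) ^ 2 / 2)) =
      fun s => Real.exp (-(1/2) * (s - σ) ^ 2) := by
    funext s; congr 1; ring
  rw [this]
  exact h1

lemma integral_gauss_shift (σ : ℝ) :
    ∫ s : ℝ, Real.exp (-(s - σ) ^ 2 / 2) = Real.sqrt (2 * π) := by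
  have : (fun s : ℝ => Real.exp (-(s - σ) ^ 2 / 2)) =
      fun s => (fun u : ℝ => Real.exp (-(1/2) * u ^ 2)) (s - σ) := by
    funext s; congr 1; ring
  rw [this, integral_sub_right_eq_self (fun u : ℝ => Real.exp (-(1/2) * u ^ 2)) σ,
    integral_gaussian]
  rw [show π / (1/2 : ℝ) = 2 * π by ring]

lemma F0_norm_le (n : ℕ) (s : ℝ) :
    |s| ^ n * Real.exp (-s ^ 2 / 2) ≤
      (n.factorial * Real.exp (n / 2) / Real.sqrt n ^ n) *
        (Real.exp (-(s - Real.sqrt n) ^ 2 / 2) + Real.exp (-(s + Real.sqrt n) ^ 2 / 2)) := by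
  set σ : ℝ := Real.sqrt n with hσ
  have hσ0 : 0 ≤ σ := Real.sqrt_nonneg _
  have hσsq : σ ^ 2 = n := Real.sq_sqrt (Nat.cast_nonneg n)
  have step1 : |s| ^ n ≤ n.factorial / σ ^ n * Real.exp (σ * |s|) := by
    rcases Nat.eq_zero_or_pos n with rfl | hn
    · simp [Real.exp_nonneg, Real.one_le_exp (by positivity : (0:ℝ) ≤ σ * |s|)]
    · have hσpos : 0 < σ := Real.sqrt_pos.mpr (by exact_mod_cast hn)
      have h := pow_le_fact_mul_exp (mul_nonneg hσ0 (abs_nonneg s)) n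
      rw [mul_pow] at h
      rw [div_mul_eq_mul_div, le_div_iff₀ (by positivity)]
      calc |s| ^ n * σ ^ n = σ ^ n * |s| ^ n := by ring
        _ ≤ n.factorial * Real.exp (σ * |s|) := h
  have step2 : Real.exp (σ * |s|) * Real.exp (-s ^ 2 / 2) ≤
      Real.exp (σ ^ 2 / 2) *
        (Real.exp (-(s - σ) ^ 2 / 2) + Real.exp (-(s + σ) ^ 2 / 2)) := by
    rw [← Real.exp_add]
    rcases le_or_gt 0 s with hs | hs
    · rw [_root_.abs_of_nonneg hs]
      have : σ * s + -s ^ 2 / 2 = σ ^ 2 / 2 + (-(s - σ) ^ 2 / 2) := by ring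
      rw [this, Real.exp_add]
      have := Real.exp_nonneg (-(s + σ) ^ 2 / 2)
      nlinarith [Real.exp_pos (σ ^ 2 / 2)]
    · rw [_root_.abs_of_neg hs]
      have : σ * (-s) + -s ^ 2 / 2 = σ ^ 2 / 2 + (-(s + σ) ^ 2 / 2) := by ring
      rw [this, Real.exp_add]
      have := Real.exp_nonneg (-(s - σ) ^ 2 / 2)
      nlinarith [Real.exp_pos (σ ^ 2 / 2)]
  have hexp : Real.exp ((n : ℝ) / 2) = Real.exp (σ ^ 2 / 2) := by rw [hσsq]
  calc |s| ^ n * Real.exp (-s ^ 2 / 2)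
      ≤ (n.factorial / σ ^ n * Real.exp (σ * |s|)) * Real.exp (-s ^ 2 / 2) := by
        apply mul_le_mul_of_nonneg_right step1 (Real.exp_nonneg _)
    _ = n.factorial / σ ^ n * (Real.exp (σ * |s|) * Real.exp (-s ^ 2 / 2)) := by ring
    _ ≤ n.factorial / σ ^ n * (Real.exp (σ ^ 2 / 2) *
        (Real.exp (-(s - σ) ^ 2 / 2) + Real.exp (-(s + σ) ^ 2 / 2))) := by
        apply mul_le_mul_of_nonneg_left step2 (by positivity)
    _ = (n.factorial * Real.exp (n / 2) / σ ^ n) *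
        (Real.exp (-(s - σ) ^ 2 / 2) + Real.exp (-(s + σ) ^ 2 / 2)) := by
        rw [hexp]; ring

lemma F0_continuous (n : ℕ) (y : ℝ) :
    Continuous (fun s : ℝ => (I * (s : ℂ)) ^ n * Complex.exp (I * s * y - s ^ 2 / 2)) := by
  apply Continuous.mul
  · exact (continuous_const.mul Complex.continuous_ofReal).pow n
  · apply Complex.continuous_exp.comp
    fun_prop

lemma dominator_integrable (n : ℕ) :
    Integrable (fun s : ℝ => (n.factorial * Real.exp (n / 2) / Real.sqrt n ^ n) *
      (Real.exp (-(s - Real.sqrt n) ^ 2 / 2) + Real.exp (-(s + Real.sqrt n) ^ 2 / 2))) := by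
  apply Integrable.const_mul
  have h2 : (fun s : ℝ => Real.exp (-(s + Real.sqrt n) ^ 2 / 2)) =
      fun s => Real.exp (-(s - (-Real.sqrt n)) ^ 2 / 2) := by
    funext s; rw [sub_neg_eq_add]
  exact (integrable_gauss_shift _).add (h2 ▸ integrable_gauss_shift (-Real.sqrt n))

lemma F0_integrable (n : ℕ) (y : ℝ) :
    Integrable (fun s : ℝ => (I * (s : ℂ)) ^ n * Complex.exp (I * s * y - s ^ 2 / 2)) := by
  apply Integrable.mono' (dominator_integrable n) (F0_continuous n y).aestronglyMeasurable
  filter_upwards with s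
  rw [norm_integrand]
  exact F0_norm_le n s

lemma F0_norm_integral_le (n : ℕ) (y : ℝ) :
    ∫ s : ℝ, ‖(I * (s : ℂ)) ^ n * Complex.exp (I * s * y - s ^ 2 / 2)‖ ≤
      n.factorial * Real.exp (n / 2) / Real.sqrt n ^ n * (2 * Real.sqrt (2 * π)) := by
  have h1 : ∫ s : ℝ, ‖(I * (s : ℂ)) ^ n * Complex.exp (I * s * y - s ^ 2 / 2)‖ ≤
      ∫ s : ℝ, (n.factorial * Real.exp (n / 2) / Real.sqrt n ^ n) *
        (Real.exp (-(s - Real.sqrt n) ^ 2 / 2) + Real.exp (-(s + Real.sqrt n) ^ 2 / 2)) := by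
    apply integral_mono_of_nonneg
    · filter_upwards with s; positivity
    · exact dominator_integrable n
    · filter_upwards with s
      rw [norm_integrand]
      exact F0_norm_le n s
  refine h1.trans ?_
  rw [integral_const_mul]
  have h2 : (fun s : ℝ => Real.exp (-(s + Real.sqrt n) ^ 2 / 2)) =
      fun s => Real.exp (-(s - (-Real.sqrt n)) ^ 2 / 2) := by
    funext s; rw [sub_neg_eq_add]
  rw [integral_add (integrable_gauss_shift _) (h2 ▸ integrable_gauss_shift (-Real.sqrt n)),
    integral_gauss_shift, h2, integral_gauss_shift]
  apply le_of_eq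
  ring


lemma two_pi_cpow_half : ((2 * π : ℝ) : ℂ) ^ (1 / 2 : ℂ) = (Real.sqrt (2 * π) : ℝ) := by
  have h := Complex.ofReal_cpow (le_of_lt Real.two_pi_pos) (1 / 2)
  rw [show ((1 / 2 : ℝ) : ℂ) = (1 / 2 : ℂ) by norm_num] at h
  rw [← h, Real.sqrt_eq_rpow]

lemma J_eq (n : ℕ) (y : ℝ) :
    ∫ s : ℝ, (I * (s : ℂ)) ^ n * Complex.exp (I * s * y - s ^ 2 / 2) =
      (Real.sqrt (2 * π) : ℝ) * iteratedDeriv n G y := by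
  induction n generalizing y with
  | zero =>
    have hb : (((-1/2 : ℝ)) : ℂ).re < 0 := by
      rw [Complex.ofReal_re]; norm_num
    have heq : (fun s : ℝ => (I * (s : ℂ)) ^ 0 * Complex.exp (I * s * y - s ^ 2 / 2)) =
        fun s : ℝ => Complex.exp ((((-1/2 : ℝ)) : ℂ) * s ^ 2 + (I * y) * s + 0) := by
      funext s
      rw [pow_zero, one_mul]
      congr 1
      push_cast
      ring
    rw [heq, integral_cexp_quadratic hb (I * y) 0]
    have h1 : ((π : ℂ) / -(((-1/2 : ℝ)) : ℂ)) = ((2 * π : ℝ) : ℂ) := by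
      push_cast
      ring
    have h2 : (0 : ℂ) - (I * y) ^ 2 / (4 * (((-1/2 : ℝ)) : ℂ)) = -(y : ℂ) ^ 2 / 2 := by
      rw [mul_pow, Complex.I_sq]
      push_cast
      ring
    rw [h1, h2, two_pi_cpow_half]
    simp only [iteratedDeriv_zero, G]
  | succ n ih =>
    have h_diff : ∀ᵐ s : ℝ, ∀ y' ∈ Metric.ball y 1,
        HasDerivAt (fun y'' : ℝ => (I * (s : ℂ)) ^ n * Complex.exp (I * s * y'' - s ^ 2 / 2))
          ((I * (s : ℂ)) ^ (n + 1) * Complex.exp (I * s * y' - s ^ 2 / 2)) y' := by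
      filter_upwards with s
      intro y' _
      have h1 : HasDerivAt (fun w : ℂ => I * s * w - (s : ℂ) ^ 2 / 2) (I * s) (y' : ℂ) := by
        simpa using ((hasDerivAt_id ((y' : ℝ) : ℂ)).const_mul (I * (s : ℂ))).sub_const ((s : ℂ) ^ 2 / 2)
      have h3 := (h1.cexp).const_mul ((I * (s : ℂ)) ^ n)
      have h4 : HasDerivAt (fun w : ℂ => (I * (s : ℂ)) ^ n * Complex.exp (I * s * w - s ^ 2 / 2))
          ((I * (s : ℂ)) ^ (n + 1) * Complex.exp (I * s * y' - s ^ 2 / 2)) (y' : ℂ) := by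
        have e : (I * (s : ℂ)) ^ (n + 1) * Complex.exp (I * s * y' - s ^ 2 / 2) =
            (I * (s : ℂ)) ^ n * (Complex.exp (I * s * y' - s ^ 2 / 2) * (I * s)) := by ring
        rw [e]
        exact h3
      exact h4.comp_ofReal
    have bound_integrable : Integrable (fun s : ℝ => |s| ^ (n + 1) * Real.exp (-s ^ 2 / 2)) := by
      have h := (F0_integrable (n + 1) y).norm
      have heq : (fun s : ℝ => ‖(I * (s : ℂ)) ^ (n + 1) * Complex.exp (I * s * y - s ^ 2 / 2)‖) =
          fun s : ℝ => |s| ^ (n + 1) * Real.exp (-s ^ 2 / 2) := funext fun s => norm_integrand _ _ _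
      rwa [heq] at h
    have key := hasDerivAt_integral_of_dominated_loc_of_deriv_le (μ := volume)
      (F := fun (y' : ℝ) (s : ℝ) => (I * (s : ℂ)) ^ n * Complex.exp (I * s * y' - s ^ 2 / 2))
      (F' := fun (y' : ℝ) (s : ℝ) => (I * (s : ℂ)) ^ (n + 1) * Complex.exp (I * s * y' - s ^ 2 / 2))
      (x₀ := y) (bound := fun s => |s| ^ (n + 1) * Real.exp (-s ^ 2 / 2))
      (Metric.ball_mem_nhds y one_pos)
      (Filter.Eventually.of_forall fun y' => (F0_continuous n y').aestronglyMeasurable)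
      (F0_integrable n y)
      ((F0_continuous (n + 1) y).aestronglyMeasurable)
      (by
        filter_upwards with s
        intro y' _
        rw [norm_integrand])
      bound_integrable
      h_diff
    have hd2 := key.2
    have hfun : (fun y' : ℝ => ∫ s : ℝ, (I * (s : ℂ)) ^ n * Complex.exp (I * s * y' - s ^ 2 / 2)) =
        fun y' : ℝ => ((Real.sqrt (2 * π) : ℝ) : ℂ) * iteratedDeriv n G y' := funext fun y' => ih y'
    rw [hfun] at hd2
    have hd3 : HasDerivAt (fun y' : ℝ => ((Real.sqrt (2 * π) : ℝ) : ℂ) * iteratedDeriv n G y')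
        (((Real.sqrt (2 * π) : ℝ) : ℂ) * iteratedDeriv (n + 1) G y) y :=
      (hasDerivAt_g_real n y).const_mul _
    exact (hd2.unique hd3).symm ▸ rfl


lemma ofReal_cpow_half {r : ℝ} (hr : 0 ≤ r) :
    ((r : ℂ)) ^ (1 / 2 : ℂ) = ((Real.sqrt r : ℝ) : ℂ) := by
  have h := Complex.ofReal_cpow hr (1 / 2)
  rw [show ((1 / 2 : ℝ) : ℂ) = (1 / 2 : ℂ) by norm_num] at h
  rw [← h, Real.sqrt_eq_rpow]

section SumNorm

variable (ρ x y : ℝ)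

noncomputable def Fser : ℕ → ℝ → ℂ := fun n s =>
  ((ρ : ℂ) ^ n * ((n.factorial : ℂ))⁻¹ * iteratedDeriv n G x) *
    ((I * (s : ℂ)) ^ n * Complex.exp (I * s * y - s ^ 2 / 2))

lemma Fser_int (n : ℕ) : Integrable (Fser ρ x y n) := (F0_integrable n y).const_mul _

lemma Fser_norm_bound (m : ℕ) : (∫ s : ℝ, ‖Fser ρ x y (m + 1) s‖) ≤
    (2 * Real.sqrt (2 * π) * Real.exp 1) * (((m + 1 : ℕ) : ℝ) * |ρ| ^ (m + 1)) := by
  set n := m + 1 with hn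
  have hnpos : (0 : ℝ) < (n : ℕ) := by positivity
  have hint : (∫ s : ℝ, ‖Fser ρ x y n s‖) =
      ‖(ρ : ℂ) ^ n * ((n.factorial : ℂ))⁻¹ * iteratedDeriv n G x‖ *
        ∫ s : ℝ, ‖(I * (s : ℂ)) ^ n * Complex.exp (I * s * y - s ^ 2 / 2)‖ := by
    rw [← integral_const_mul]
    congr 1
    funext s
    rw [Fser, norm_mul]
  rw [hint]
  have hc : ‖(ρ : ℂ) ^ n * ((n.factorial : ℂ))⁻¹ * iteratedDeriv n G x‖ ≤
      |ρ| ^ n * ((n.factorial : ℝ))⁻¹ *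
        (n.factorial * Real.exp (n / 2) / Real.sqrt n ^ n) := by
    rw [norm_mul, norm_mul]
    have h1 : ‖((ρ : ℂ)) ^ n‖ = |ρ| ^ n := by
      rw [norm_pow, Complex.norm_real, Real.norm_eq_abs]
    have h2 : ‖((n.factorial : ℂ))⁻¹‖ = ((n.factorial : ℝ))⁻¹ := by
      rw [norm_inv]
      norm_num
    rw [h1, h2]
    apply mul_le_mul_of_nonneg_left _ (by positivity)
    have hR : (0 : ℝ) < Real.sqrt n := Real.sqrt_pos.mpr hnpos
    have hgb := g_bound n x hR
    rwa [Real.sq_sqrt hnpos.le] at hgb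
  have he : Real.exp ((n : ℝ) / 2) * Real.exp ((n : ℝ) / 2) = Real.exp (n : ℝ) := by
    rw [← Real.exp_add]; congr 1; ring
  have hs : Real.sqrt n ^ n * Real.sqrt n ^ n = (n : ℝ) ^ n := by
    rw [← mul_pow, Real.mul_self_sqrt hnpos.le]
  have hfe : (n.factorial : ℝ) * Real.exp (n : ℝ) / (n : ℝ) ^ n ≤ Real.exp 1 * n := by
    rw [div_le_iff₀ (by positivity)]
    calc (n.factorial : ℝ) * Real.exp (n : ℝ) ≤ Real.exp 1 * (n : ℝ) ^ (n + 1) :=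
          fact_mul_exp_le (by omega)
      _ = Real.exp 1 * (n : ℝ) * (n : ℝ) ^ n := by rw [pow_succ]; ring
  have hff : (0:ℝ) < (n.factorial : ℝ) := by exact_mod_cast n.factorial_pos
  calc ‖(ρ : ℂ) ^ n * ((n.factorial : ℂ))⁻¹ * iteratedDeriv n G x‖ *
        ∫ s : ℝ, ‖(I * (s : ℂ)) ^ n * Complex.exp (I * s * y - s ^ 2 / 2)‖
      ≤ (|ρ| ^ n * ((n.factorial : ℝ))⁻¹ *
          (n.factorial * Real.exp (n / 2) / Real.sqrt n ^ n)) *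
        (n.factorial * Real.exp (n / 2) / Real.sqrt n ^ n * (2 * Real.sqrt (2 * π))) := by
        apply mul_le_mul hc (F0_norm_integral_le n y) (integral_nonneg fun s => norm_nonneg _)
        positivity
    _ = (2 * Real.sqrt (2 * π)) * (|ρ| ^ n *
          ((n.factorial : ℝ) * (Real.exp ((n : ℝ) / 2) * Real.exp ((n : ℝ) / 2)) /
            (Real.sqrt n ^ n * Real.sqrt n ^ n))) := by
        field_simp
    _ = (2 * Real.sqrt (2 * π)) * (|ρ| ^ n *
          ((n.factorial : ℝ) * Real.exp (n : ℝ) / (n : ℝ) ^ n)) := by rw [he, hs]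
    _ ≤ (2 * Real.sqrt (2 * π)) * (|ρ| ^ n * (Real.exp 1 * n)) := by
        apply mul_le_mul_of_nonneg_left _ (by positivity)
        exact mul_le_mul_of_nonneg_left hfe (by positivity)
    _ = (2 * Real.sqrt (2 * π) * Real.exp 1) * (((n : ℕ) : ℝ) * |ρ| ^ n) := by ring

lemma Fser_summable (hρ : |ρ| < 1) : Summable fun n => ∫ s : ℝ, ‖Fser ρ x y n s‖ := by
  rw [← summable_nat_add_iff 1]
  have hsum : Summable (fun n : ℕ => (n : ℝ) ^ 1 * |ρ| ^ n) :=
    summable_pow_mul_geometric_of_norm_lt_one 1 (by rwa [Real.norm_eq_abs, _root_.abs_abs])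
  have hsum2 := (summable_nat_add_iff 1).2 hsum
  have hsum3 : Summable (fun m : ℕ =>
      (2 * Real.sqrt (2 * π) * Real.exp 1) * (((m + 1 : ℕ) : ℝ) * |ρ| ^ (m + 1))) := by
    apply Summable.mul_left
    apply hsum2.congr
    intro m
    rw [pow_one]
  exact Summable.of_nonneg_of_le (fun m => integral_nonneg fun s => norm_nonneg _)
    (fun m => Fser_norm_bound ρ x y m) hsum3

end SumNorm


lemma tsum_Fser (ρ x y : ℝ) (s : ℝ) :
    HasSum (fun n => Fser ρ x y n s)
      (G ((x : ℂ) + I * ρ * s) * Complex.exp (I * s * y - s ^ 2 / 2)) := by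
  have hT := Complex.hasSum_taylorSeries_of_entire G_diff (x : ℂ) ((x : ℂ) + I * ρ * s)
  simp only [add_sub_cancel_left] at hT
  have hT2 := hT.mul_right (Complex.exp (I * s * y - s ^ 2 / 2))
  have heq : (fun n : ℕ => ((n.factorial : ℂ)⁻¹ • (I * (ρ : ℂ) * s) ^ n • iteratedDeriv n G x) *
      Complex.exp (I * s * y - s ^ 2 / 2)) = fun n => Fser ρ x y n s := by
    funext n
    simp only [Fser, smul_eq_mul]
    rw [show I * (ρ : ℂ) * (s : ℂ) = (ρ : ℂ) * (I * s) by ring, mul_pow]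
    ring
  rwa [heq] at hT2

lemma integral_tsum_eval (ρ x y : ℝ) (hρ2 : ρ ^ 2 < 1) :
    ∫ s : ℝ, G ((x : ℂ) + I * ρ * s) * Complex.exp (I * s * y - s ^ 2 / 2) =
      ((Real.sqrt (2 * π / (1 - ρ ^ 2)) : ℝ) : ℂ) *
        ((Real.exp (-x ^ 2 / 2 + (y - ρ * x) ^ 2 / (2 * (ρ ^ 2 - 1))) : ℝ) : ℂ) := by
  have h1ρ : (0 : ℝ) < 1 - ρ ^ 2 := by nlinarith
  have hbneg : ((ρ ^ 2 - 1) / 2 : ℝ) < 0 := by nlinarith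
  have hb : ((((ρ ^ 2 - 1) / 2 : ℝ)) : ℂ).re < 0 := by rwa [Complex.ofReal_re]
  have hcne : ((ρ : ℂ) ^ 2 - 1) ≠ 0 := by
    have h := Complex.ofReal_ne_zero.mpr (show (ρ ^ 2 - 1 : ℝ) ≠ 0 by nlinarith)
    push_cast at h
    exact h
  have heq : (fun s : ℝ => G ((x : ℂ) + I * ρ * s) * Complex.exp (I * s * y - s ^ 2 / 2)) =
      fun s : ℝ => Complex.exp ((((ρ ^ 2 - 1) / 2 : ℝ)) * (s : ℂ) ^ 2 +
        (I * ((y : ℂ) - ρ * x)) * s + ((-x ^ 2 / 2 : ℝ) : ℂ)) := by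
    funext s
    rw [G, ← Complex.exp_add]
    congr 1
    push_cast
    linear_combination (-((ρ : ℂ) ^ 2 * (s : ℂ) ^ 2 / 2)) * Complex.I_sq
  rw [heq, integral_cexp_quadratic hb (I * ((y : ℂ) - ρ * x)) ((-x ^ 2 / 2 : ℝ) : ℂ)]
  congr 1
  · have h1 : ((π : ℂ)) / -((((ρ ^ 2 - 1) / 2 : ℝ)) : ℂ) = ((2 * π / (1 - ρ ^ 2) : ℝ) : ℂ) := by
      rw [← Complex.ofReal_neg, ← Complex.ofReal_div]
      congr 1
      rw [div_eq_div_iff (ne_of_gt (by linarith)) h1ρ.ne']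
      ring
    rw [h1, ofReal_cpow_half (by positivity)]
  · rw [Complex.ofReal_exp]
    congr 1
    rw [mul_pow, Complex.I_sq]
    have hne : (ρ ^ 2 - 1 : ℝ) ≠ 0 := by nlinarith
    have hreal : (-x ^ 2 / 2 : ℝ) - (-1) * (y - ρ * x) ^ 2 / (4 * ((ρ ^ 2 - 1) / 2)) =
        -x ^ 2 / 2 + (y - ρ * x) ^ 2 / (2 * (ρ ^ 2 - 1)) := by
      field_simp
      ring
    rw [← hreal]
    push_cast
    ring

lemma main_hasSum (ρ x y : ℝ) (hρ : |ρ| < 1) :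
    HasSum (fun n : ℕ => (ρ : ℂ) ^ n * ((n.factorial : ℂ))⁻¹ *
        iteratedDeriv n G x * iteratedDeriv n G y)
      ((((Real.sqrt (1 - ρ ^ 2))⁻¹ : ℝ) : ℂ) *
        ((Real.exp (-x ^ 2 / 2 + (y - ρ * x) ^ 2 / (2 * (ρ ^ 2 - 1))) : ℝ) : ℂ)) := by
  have hρ2 : ρ ^ 2 < 1 := by
    rw [← _root_.sq_abs]
    exact pow_lt_one₀ (abs_nonneg ρ) hρ (by norm_num)
  have h1ρ : (0 : ℝ) < 1 - ρ ^ 2 := by nlinarith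
  have hs := hasSum_integral_of_summable_integral_norm (μ := volume)
    (Fser_int ρ x y) (Fser_summable ρ x y hρ)
  have htsum : (fun s : ℝ => ∑' n, Fser ρ x y n s) =
      fun s : ℝ => G ((x : ℂ) + I * ρ * s) * Complex.exp (I * s * y - s ^ 2 / 2) :=
    funext fun s => (tsum_Fser ρ x y s).tsum_eq
  rw [htsum, integral_tsum_eval ρ x y hρ2] at hs
  have hFn : (fun n => ∫ s : ℝ, Fser ρ x y n s) = fun n =>
      ((ρ : ℂ) ^ n * ((n.factorial : ℂ))⁻¹ * iteratedDeriv n G x) *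
        (((Real.sqrt (2 * π) : ℝ) : ℂ) * iteratedDeriv n G y) := by
    funext n
    rw [show (fun s : ℝ => Fser ρ x y n s) = fun s : ℝ =>
        ((ρ : ℂ) ^ n * ((n.factorial : ℂ))⁻¹ * iteratedDeriv n G x) *
          ((I * (s : ℂ)) ^ n * Complex.exp (I * s * y - s ^ 2 / 2)) from rfl]
    rw [integral_const_mul, J_eq]
  rw [hFn] at hs
  have hsqne : ((Real.sqrt (2 * π) : ℝ) : ℂ) ≠ 0 :=
    Complex.ofReal_ne_zero.mpr (by positivity)
  have hs2 := hs.mul_right (((Real.sqrt (2 * π) : ℝ) : ℂ))⁻¹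
  have heq2 : (fun n : ℕ => ((ρ : ℂ) ^ n * ((n.factorial : ℂ))⁻¹ * iteratedDeriv n G x) *
      (((Real.sqrt (2 * π) : ℝ) : ℂ) * iteratedDeriv n G y) * (((Real.sqrt (2 * π) : ℝ) : ℂ))⁻¹) =
      fun n : ℕ => (ρ : ℂ) ^ n * ((n.factorial : ℂ))⁻¹ *
        iteratedDeriv n G x * iteratedDeriv n G y := by
    funext n
    have key : ∀ (c a g : ℂ), a ≠ 0 → (c * (a * g)) * a⁻¹ = c * g := by
      intro c a g ha
      field_simp
    exact key _ _ _ hsqne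
  rw [heq2] at hs2
  have hlim : ((Real.sqrt (2 * π / (1 - ρ ^ 2)) : ℝ) : ℂ) *
      ((Real.exp (-x ^ 2 / 2 + (y - ρ * x) ^ 2 / (2 * (ρ ^ 2 - 1))) : ℝ) : ℂ) *
      (((Real.sqrt (2 * π) : ℝ) : ℂ))⁻¹ =
      (((Real.sqrt (1 - ρ ^ 2))⁻¹ : ℝ) : ℂ) *
        ((Real.exp (-x ^ 2 / 2 + (y - ρ * x) ^ 2 / (2 * (ρ ^ 2 - 1))) : ℝ) : ℂ) := by
    have hreal : Real.sqrt (2 * π / (1 - ρ ^ 2)) * (Real.sqrt (2 * π))⁻¹ =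
        (Real.sqrt (1 - ρ ^ 2))⁻¹ := by
      rw [Real.sqrt_div (by positivity) (1 - ρ ^ 2)]
      have h2π : Real.sqrt (2 * π) ≠ 0 := by positivity
      have h1ρ' : Real.sqrt (1 - ρ ^ 2) ≠ 0 := by positivity
      field_simp
    rw [← Complex.ofReal_inv, ← Complex.ofReal_mul, ← Complex.ofReal_mul]
    rw [mul_comm (Real.sqrt (2 * π / (1 - ρ ^ 2))) _, mul_assoc, hreal]
    rw [Complex.ofReal_mul, Complex.ofReal_inv]
    ring
  rwa [hlim] at hs2

end Mehler

/-- Mehler's identity: for `|ρ| < 1`, the bivariate standard Gaussian density with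
correlation `ρ` admits the convergent expansion
`(2π√(1−ρ²))⁻¹ exp(−(x²−2ρxy+y²)/(2(1−ρ²))) = φ(x)φ(y) + Σ_{l=1}^∞ (ρ^l/l!) φ^{(l)}(x) φ^{(l)}(y)`,
stated here as: the series over `l ≥ 1` has sum equal to the density minus `φ(x)φ(y)`. -/
theorem mehler_identity (ρ : ℝ) (hρ : |ρ| < 1) (x y : ℝ) :
    HasSum
      (fun l : ℕ =>
        ρ ^ (l + 1) / (Nat.factorial (l + 1) : ℝ) * phiD (l + 1) x * phiD (l + 1) y)
      ((2 * Real.pi * Real.sqrt (1 - ρ ^ 2))⁻¹ *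
          Real.exp (-(x ^ 2 - 2 * ρ * x * y + y ^ 2) / (2 * (1 - ρ ^ 2))) -
        phi x * phi y) := by
  have hρ2 : ρ ^ 2 < 1 := by
    rw [← _root_.sq_abs]
    exact pow_lt_one₀ (abs_nonneg ρ) hρ (by norm_num)
  have h1ρ : (0 : ℝ) < 1 - ρ ^ 2 := by nlinarith
  have hne : (ρ ^ 2 - 1 : ℝ) ≠ 0 := by nlinarith
  have hne' : (1 - ρ ^ 2 : ℝ) ≠ 0 := by nlinarith
  have hmain := (Mehler.main_hasSum ρ x y hρ).mul_right (((2 * π : ℝ) : ℂ))⁻¹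
  set f : ℕ → ℝ := fun n => ρ ^ n / n.factorial * phiD n x * phiD n y with hf
  have hterm : (fun n : ℕ => (ρ : ℂ) ^ n * ((n.factorial : ℂ))⁻¹ *
      iteratedDeriv n Mehler.G x * iteratedDeriv n Mehler.G y * (((2 * π : ℝ) : ℂ))⁻¹) =
      fun n => ((f n : ℝ) : ℂ) := by
    funext n
    have hAne : ((Real.sqrt (2 * π) : ℝ) : ℂ) ≠ 0 := Complex.ofReal_ne_zero.mpr (by positivity)
    have h2 : ((Real.sqrt (2 * π) : ℝ) : ℂ) * ((Real.sqrt (2 * π) : ℝ) : ℂ) = ((2 * π : ℝ) : ℂ) := by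
      rw [← Complex.ofReal_mul, Real.mul_self_sqrt Real.two_pi_pos.le]
    have hgx : iteratedDeriv n Mehler.G x =
        ((Real.sqrt (2 * π) : ℝ) : ℂ) * ((phiD n x : ℝ) : ℂ) := by
      rw [Mehler.phiD_eq n x, ← mul_assoc, mul_inv_cancel₀ hAne, one_mul]
    have hgy : iteratedDeriv n Mehler.G y =
        ((Real.sqrt (2 * π) : ℝ) : ℂ) * ((phiD n y : ℝ) : ℂ) := by
      rw [Mehler.phiD_eq n y, ← mul_assoc, mul_inv_cancel₀ hAne, one_mul]
    have hfact : ((n.factorial : ℂ)) ≠ 0 := Nat.cast_ne_zero.mpr n.factorial_ne_zero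
    rw [hgx, hgy, hf, ← h2]
    push_cast
    generalize hA : ((Real.sqrt (2 * π) : ℝ) : ℂ) = A at hAne ⊢
    field_simp
  rw [hterm] at hmain
  have hEeq : (-x ^ 2 / 2 + (y - ρ * x) ^ 2 / (2 * (ρ ^ 2 - 1))) =
      -(x ^ 2 - 2 * ρ * x * y + y ^ 2) / (2 * (1 - ρ ^ 2)) := by
    field_simp
    ring
  have hT : ((((Real.sqrt (1 - ρ ^ 2))⁻¹ : ℝ)) : ℂ) *
      ((Real.exp (-x ^ 2 / 2 + (y - ρ * x) ^ 2 / (2 * (ρ ^ 2 - 1))) : ℝ) : ℂ) *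
      (((2 * π : ℝ) : ℂ))⁻¹ =
      (((2 * Real.pi * Real.sqrt (1 - ρ ^ 2))⁻¹ *
        Real.exp (-(x ^ 2 - 2 * ρ * x * y + y ^ 2) / (2 * (1 - ρ ^ 2))) : ℝ) : ℂ) := by
    rw [hEeq]
    push_cast
    rw [mul_inv]
    ring
  rw [hT] at hmain
  have hreal := Complex.hasSum_ofReal.mp hmain
  have hshift := (hasSum_nat_add_iff' 1).2 hreal
  have hf0 : ∑ i ∈ Finset.range 1, f i = phi x * phi y := by
    rw [Finset.sum_range_one, hf]
    simp [phiD, iteratedDeriv_zero]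
  rw [hf0] at hshift
  exact hshift
end
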